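/- Let λ ∈ ℝ and let c = -iλ. Then the multiplication operator m_c maps D'_λ onto D'_λ, and its kernel on D'_λ is the one-dimensional space ℂ·δ_λ: a tempered distribution T supported in {λ} satisfies m_c T = 0 if and only if T is a scalar multiple of δ_λ. -/

import Mathlib

open SchwartzMap

/-- A tempered distribution `T` on `ℝ` is *supported in `{l}`* if `T φ = 0` for every Schwartz
function `φ` vanishing on some open neighbourhood of `l`. -/
def SuppInPt (l : ℝ) (T : 𝓢(ℝ, ℂ) →L[ℂ] ℂ) : Prop :=
  ∀ φ : 𝓢(ℝ, ℂ), (∃ U ∈ nhds l, ∀ x ∈ U, φ x = 0) → T φ = 0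

/-- Multiplication of a Schwartz function by the coordinate `x`. -/
noncomputable def mulX : 𝓢(ℝ, ℂ) →L[ℝ] 𝓢(ℝ, ℂ) :=
  SchwartzMap.bilinLeftCLM (ContinuousLinearMap.mul ℝ ℂ) Complex.ofRealCLM.hasTemperateGrowth

/-- Multiplication of a Schwartz function by the polynomial `x ↦ i x + c`. -/
noncomputable def mulPoly (c : ℂ) (φ : 𝓢(ℝ, ℂ)) : 𝓢(ℝ, ℂ) :=
  Complex.I • mulX φ + c • φ

@[simp] lemma mulPoly_apply (c : ℂ) (φ : 𝓢(ℝ, ℂ)) (x : ℝ) :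
    mulPoly c φ x = (Complex.I * x + c) * φ x := by
  have h : mulX φ x = φ x * (x : ℂ) := rfl
  simp [mulPoly, h]
  ring


open MeasureTheory Metric Complex
open scoped ContDiff

lemma nat_le_infty (n : ℕ) : ((n : ℕ) : WithTop ℕ∞) ≤ ∞ :=
  ENat.natCast_le_of_coe_top_le_withTop le_rfl n
lemma nat_lt_infty (n : ℕ) : ((n : ℕ) : WithTop ℕ∞) < ∞ :=
  ENat.natCast_lt_of_coe_top_le_withTop le_rfl n

noncomputable def Qd (l : ℝ) (n : ℕ) (g : ℝ → ℂ) (x : ℝ) : ℂ :=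
  ∫ t in (0:ℝ)..1, t ^ n • iteratedDeriv (n + 1) g (l + t * (x - l))

variable {l : ℝ} {g : ℝ → ℂ}

lemma cont_iterated (hg : ContDiff ℝ ∞ g) (m : ℕ) : Continuous (iteratedDeriv m g) :=
  hg.continuous_iteratedDeriv m (nat_le_infty m)

lemma diff_iterated (hg : ContDiff ℝ ∞ g) (m : ℕ) : Differentiable ℝ (iteratedDeriv m g) :=
  hg.differentiable_iteratedDeriv m (nat_lt_infty m)

lemma cont_integrand (hg : ContDiff ℝ ∞ g) (n : ℕ) (x : ℝ) :
    Continuous fun t : ℝ => t ^ n • iteratedDeriv (n + 1) g (l + t * (x - l)) :=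
  (continuous_pow n).smul ((cont_iterated hg (n+1)).comp (by continuity))

lemma hasDerivAt_Qd (hg : ContDiff ℝ ∞ g) (n : ℕ) (x₀ : ℝ) :
    HasDerivAt (Qd l n g) (Qd l (n + 1) g x₀) x₀ := by
  obtain ⟨C, hC⟩ : ∃ C, ∀ y ∈ closedBall l (|x₀ - l| + 1), ‖iteratedDeriv (n + 2) g y‖ ≤ C :=
    (isCompact_closedBall l (|x₀ - l| + 1)).exists_bound_of_continuousOn
      (cont_iterated hg (n + 2)).continuousOn
  have key := intervalIntegral.hasDerivAt_integral_of_dominated_loc_of_deriv_le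
    (F := fun x t => t ^ n • iteratedDeriv (n + 1) g (l + t * (x - l)))
    (F' := fun x t => t ^ (n + 1) • iteratedDeriv (n + 2) g (l + t * (x - l)))
    (x₀ := x₀) (a := (0:ℝ)) (b := 1) (μ := volume) (bound := fun _ => C)
    (s := ball x₀ 1) (ball_mem_nhds x₀ one_pos)
    (Filter.Eventually.of_forall fun x => ((cont_integrand hg n x).aestronglyMeasurable).restrict)
    ((cont_integrand hg n x₀).intervalIntegrable 0 1)
    (((cont_integrand hg (n + 1) x₀)).aestronglyMeasurable.restrict)
    ?_ (intervalIntegrable_const) ?_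
  · exact key.2
  · refine Filter.Eventually.of_forall fun t ht x hx => ?_
    have ht' : t ∈ Set.Ioc (0:ℝ) 1 := by
      simpa [Set.uIoc_of_le (by norm_num : (0:ℝ) ≤ 1)] using ht
    have hxl : |x - l| ≤ |x₀ - l| + 1 := by
      have h1 := abs_sub_abs_le_abs_sub (x - l) (x₀ - l)
      have h2 : |x - l - (x₀ - l)| = |x - x₀| := by ring_nf
      simp only [mem_ball, Real.dist_eq] at hx
      linarith [le_of_eq h2.symm]
    have hmem : l + t * (x - l) ∈ closedBall l (|x₀ - l| + 1) := by
      simp only [mem_closedBall, Real.dist_eq, add_sub_cancel_left]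
      rw [abs_mul, abs_of_pos ht'.1]
      calc t * |x - l| ≤ 1 * |x - l| := by
            apply mul_le_mul_of_nonneg_right ht'.2 (abs_nonneg _)
        _ = |x - l| := one_mul _
        _ ≤ |x₀ - l| + 1 := hxl
    calc ‖t ^ (n+1) • iteratedDeriv (n + 2) g (l + t * (x - l))‖
        = t ^ (n+1) * ‖iteratedDeriv (n + 2) g (l + t * (x - l))‖ := by
          rw [norm_smul, Real.norm_eq_abs, abs_of_pos (pow_pos ht'.1 _)]
      _ ≤ 1 * C := mul_le_mul (pow_le_one₀ ht'.1.le ht'.2) (hC _ hmem)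
            (norm_nonneg _) one_pos.le
      _ = C := one_mul C
  · refine Filter.Eventually.of_forall fun t _ x _ => ?_
    have h1 : HasDerivAt (fun y : ℝ => l + t * (y - l)) t x := by
      simpa using (((hasDerivAt_id x).sub_const l).const_mul t).const_add l
    have h2 := ((diff_iterated hg (n + 1) (l + t * (x - l))).hasDerivAt).scomp x h1
    have h3 := h2.const_smul (t ^ n)
    convert h3 using 1
    · rfl
    rw [smul_smul, ← pow_succ,
      show deriv (iteratedDeriv (n+1) g) = iteratedDeriv (n + 2) g from (iteratedDeriv_succ).symm]

lemma iteratedDeriv_Qd (hg : ContDiff ℝ ∞ g) (n : ℕ) :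
    iteratedDeriv n (Qd l 0 g) = Qd l n g := by
  induction n with
  | zero => simp [iteratedDeriv_zero]
  | succ m ih =>
    rw [iteratedDeriv_succ, ih]
    funext x
    exact (hasDerivAt_Qd hg m x).deriv

lemma contDiff_Qd (hg : ContDiff ℝ ∞ g) : ContDiff ℝ ∞ (Qd l 0 g) := by
  apply contDiff_of_differentiable_iteratedDeriv
  intro m _
  rw [iteratedDeriv_Qd hg]
  exact fun x => (hasDerivAt_Qd hg m x).differentiableAt

lemma Qd_mul (hg : ContDiff ℝ ∞ g) (x : ℝ) :
    (x - l) • Qd l 0 g x = g x - g l := by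
  have hderiv : ∀ t ∈ Set.uIcc (0:ℝ) 1,
      HasDerivAt (fun t : ℝ => g (l + t * (x - l))) ((x - l) • deriv g (l + t * (x - l))) t := by
    intro t _
    have h1 : HasDerivAt (fun s : ℝ => l + s * (x - l)) (x - l) t := by
      simpa using ((hasDerivAt_id t).mul_const (x - l)).const_add l
    exact (hg.differentiable (by simp) _).hasDerivAt.scomp t h1
  have hint : IntervalIntegrable (fun t : ℝ => (x - l) • deriv g (l + t * (x - l)))
      volume 0 1 := by
    apply Continuous.intervalIntegrable
    exact (continuous_const : Continuous fun _ : ℝ => (x - l : ℝ)).smul ((hg.continuous_deriv (nat_le_infty 1)).comp (f := fun t : ℝ => l + t * (x - l)) (by continuity))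
  have := intervalIntegral.integral_eq_sub_of_hasDerivAt hderiv hint
  simp only [one_mul, zero_mul, add_zero, add_sub_cancel] at this
  rw [Qd]
  calc (x - l) • ∫ t in (0:ℝ)..1, t ^ 0 • iteratedDeriv 1 g (l + t * (x - l))
      = ∫ t in (0:ℝ)..1, (x - l) • deriv g (l + t * (x - l)) := by
        rw [← intervalIntegral.integral_smul]
        congr 1
        funext t
        simp [iteratedDeriv_one]
    _ = g x - g l := this

lemma Qd_bound (hg : ContDiff ℝ ∞ g) (n : ℕ) {M : ℝ} (hM : 0 ≤ M)
    (hb : ∀ y, ‖iteratedDeriv (n + 1) g y‖ ≤ M) (x : ℝ) : ‖Qd l n g x‖ ≤ M := by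
  have := intervalIntegral.norm_integral_le_of_norm_le_const
    (C := M) (a := (0:ℝ)) (b := 1)
    (f := fun t => t ^ n • iteratedDeriv (n + 1) g (l + t * (x - l))) ?_
  · rw [Qd]; refine le_trans this (by norm_num)
  · intro t ht
    have ht' : t ∈ Set.Ioc (0:ℝ) 1 := by
      simpa [Set.uIoc_of_le (by norm_num : (0:ℝ) ≤ 1)] using ht
    rw [norm_smul, Real.norm_eq_abs, abs_of_pos (pow_pos ht'.1 _)]
    calc t ^ n * ‖iteratedDeriv (n + 1) g (l + t * (x - l))‖
        ≤ 1 * M := mul_le_mul (pow_le_one₀ ht'.1.le ht'.2) (hb _) (norm_nonneg _) one_pos.le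
      _ = M := one_mul M

lemma iteratedDeriv_add' {f₂ : ℝ → ℂ} (hf : ContDiff ℝ ∞ g) (hf₂ : ContDiff ℝ ∞ f₂)
    (n : ℕ) (x : ℝ) :
    iteratedDeriv n (g + f₂) x = iteratedDeriv n g x + iteratedDeriv n f₂ x := by
  simp only [iteratedDeriv_eq_iteratedFDeriv]
  rw [iteratedFDeriv_add_apply (hf.of_le (nat_le_infty n)).contDiffAt (hf₂.of_le (nat_le_infty n)).contDiffAt]
  rfl

lemma iteratedDeriv_smul' (a : ℂ) (hf : ContDiff ℝ ∞ g) (n : ℕ) (x : ℝ) :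
    iteratedDeriv n (a • g) x = a • iteratedDeriv n g x := by
  simp only [iteratedDeriv_eq_iteratedFDeriv]
  rw [iteratedFDeriv_const_smul_apply (hf.of_le (nat_le_infty n)).contDiffAt]
  rfl

lemma Qd_add {g₂ : ℝ → ℂ} (hg : ContDiff ℝ ∞ g) (hg₂ : ContDiff ℝ ∞ g₂) (n : ℕ) (x : ℝ) :
    Qd l n (g + g₂) x = Qd l n g x + Qd l n g₂ x := by
  rw [Qd, Qd, Qd, ← intervalIntegral.integral_add
    ((cont_integrand hg n x).intervalIntegrable 0 1)
    ((cont_integrand hg₂ n x).intervalIntegrable 0 1)]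
  congr 1
  funext t
  rw [iteratedDeriv_add' hg hg₂, smul_add]

lemma Qd_smul (a : ℂ) (hg : ContDiff ℝ ∞ g) (n : ℕ) (x : ℝ) :
    Qd l n (a • g) x = a • Qd l n g x := by
  rw [Qd, Qd, ← intervalIntegral.integral_smul]
  congr 1
  funext t
  rw [iteratedDeriv_smul' a hg, smul_comm]

noncomputable def bump (l : ℝ) : ContDiffBump l := ⟨1, 2, one_pos, one_lt_two⟩

noncomputable def chi (l : ℝ) : ℝ → ℂ := fun x => ((bump l) x : ℂ)

lemma chi_smooth : ContDiff ℝ ∞ (chi l) :=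
  Complex.ofRealCLM.contDiff.comp (bump l).contDiff

lemma chi_one {x : ℝ} (hx : x ∈ closedBall l 1) : chi l x = 1 := by
  rw [chi, (bump l).one_of_mem_closedBall hx, Complex.ofReal_one]

lemma chi_zero {x : ℝ} (hx : (2:ℝ) ≤ dist x l) : chi l x = 0 := by
  rw [chi, (bump l).zero_of_le_dist hx, Complex.ofReal_zero]

lemma chi_compactSupport : HasCompactSupport (chi l) :=
  HasCompactSupport.comp_left (g := fun r : ℝ => (r:ℂ)) (bump l).hasCompactSupport
    Complex.ofReal_zero

lemma chi_bound (n : ℕ) : ∃ C : ℝ, 0 ≤ C ∧ ∀ x, ‖iteratedFDeriv ℝ n (chi l) x‖ ≤ C := by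
  obtain ⟨C, hC⟩ := ((chi_compactSupport (l := l)).iteratedFDeriv n).exists_bound_of_continuous
    ((chi_smooth).continuous_iteratedFDeriv (nat_le_infty n))
  exact ⟨max C 0, le_max_right _ _, fun x => le_trans (hC x) (le_max_left _ _)⟩

noncomputable def chiS (l : ℝ) : 𝓢(ℝ, ℂ) where
  toFun := chi l
  smooth' := chi_smooth
  decay' := by
    intro k n
    have h1 : HasCompactSupport fun x : ℝ => ‖x‖ ^ k * ‖iteratedFDeriv ℝ n (chi l) x‖ :=
      HasCompactSupport.mul_left
        ((chi_compactSupport (l := l)).iteratedFDeriv n).norm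
    obtain ⟨C, hC⟩ := h1.exists_bound_of_continuous
      (((continuous_norm.pow k)).mul
        ((chi_smooth).continuous_iteratedFDeriv (nat_le_infty n)).norm)
    exact ⟨C, fun x => le_trans (le_abs_self _) (hC x)⟩

@[simp] lemma chiS_apply (x : ℝ) : chiS l x = chi l x := rfl

lemma iteratedDeriv_zero_fun {n : ℕ} {x : ℝ} : iteratedDeriv n (fun _ : ℝ => (0:ℂ)) x = 0 := by
  rw [iteratedDeriv_eq_iteratedFDeriv, iteratedFDeriv_zero_fun]
  rfl

noncomputable def hfun (l : ℝ) (f : ℝ → ℂ) : ℝ → ℂ := fun y => f y + (-(f l)) • chi l y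

lemma hfun_apply (f : ℝ → ℂ) (y : ℝ) : hfun l f y = f y - f l * chi l y := by
  simp [hfun, smul_eq_mul]; ring

lemma hfun_smooth (ψ : 𝓢(ℝ, ℂ)) : ContDiff ℝ ∞ (hfun l ⇑ψ) :=
  (ψ.smooth ⊤).add (chi_smooth.const_smul _)

lemma hfun_at : hfun l g l = 0 := by
  rw [hfun_apply, chi_one (mem_closedBall_self zero_le_one), mul_one, sub_self]

lemma chi_bound_upto (l : ℝ) (N : ℕ) :
    ∃ B : ℝ, 0 ≤ B ∧ ∀ j ≤ N, ∀ x, ‖iteratedFDeriv ℝ j (chi l) x‖ ≤ B := by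
  induction N with
  | zero =>
    obtain ⟨C, h0, h⟩ := chi_bound (l := l) 0
    exact ⟨C, h0, fun j hj x => by rw [Nat.le_zero.mp hj]; exact h x⟩
  | succ N ih =>
    obtain ⟨B, hB0, hB⟩ := ih
    obtain ⟨C, hC0, hC⟩ := chi_bound (l := l) (N + 1)
    refine ⟨max B C, le_trans hB0 (le_max_left _ _), fun j hj x => ?_⟩
    rcases Nat.lt_succ_iff_lt_or_eq.mp (Nat.lt_succ_of_le hj) with h | h
    · exact le_trans (hB j (Nat.lt_succ_iff.mp h) x) (le_max_left _ _)
    · subst h; exact le_trans (hC x) (le_max_right _ _)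

noncomputable def divOp (l : ℝ) : 𝓢(ℝ, ℂ) →L[ℂ] 𝓢(ℝ, ℂ) :=
  mkCLM (fun f x => (-Complex.I) * (chi l x * Qd l 0 (hfun l f) x))
    (fun f g x => by
      beta_reduce
      have h : hfun l (⇑f + ⇑g) = hfun l ⇑f + hfun l ⇑g := by
        funext y
        simp only [hfun_apply, Pi.add_apply]
        ring
      rw [show ⇑(f + g) = ⇑f + ⇑g from rfl, h, Qd_add (hfun_smooth f) (hfun_smooth g)]
      ring)
    (fun a f x => by
      beta_reduce
      have h : hfun l (a • ⇑f) = a • hfun l ⇑f := by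
        funext y
        simp only [hfun_apply, Pi.smul_apply, smul_eq_mul]
        ring
      rw [show ⇑(a • f) = a • ⇑f from rfl, h, Qd_smul a (hfun_smooth f)]
      simp only [smul_eq_mul, RingHom.id_apply]
      ring)
    (fun f => by
      exact (contDiff_const.mul (chi_smooth.mul (contDiff_Qd (hfun_smooth f)))))
    (by
      rintro ⟨k, n⟩
      obtain ⟨B, hB0, hB⟩ := chi_bound_upto l (n + 1)
      refine ⟨Finset.Iic (0, n + 1), (‖l‖ + 2) ^ k * (2 ^ n * (B * (1 + B))), by positivity,
        fun ψ x => ?_⟩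
      set P := (Finset.Iic (0, n + 1)).sup (schwartzSeminormFamily ℂ ℝ ℂ) ψ with hP
      have hP0 : 0 ≤ P := apply_nonneg _ _
      -- bounds on ψ's derivatives
      have hψ : ∀ j ≤ n + 1, ∀ y : ℝ, ‖iteratedFDeriv ℝ j (⇑ψ) y‖ ≤ P := by
        intro j hj y
        have := one_add_le_sup_seminorm_apply (𝕜 := ℂ) (m := (0, n + 1)) (k := 0) (n := j)
          le_rfl hj ψ y
        simp at this
        exact this
      have hψl : ‖ψ l‖ ≤ P := by
        have := hψ 0 (Nat.zero_le _) l
        simpa [norm_iteratedFDeriv_zero] using this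
      -- bound on derivatives of hfun
      have hh : ∀ j ≤ n + 1, ∀ y : ℝ, ‖iteratedFDeriv ℝ j (hfun l ⇑ψ) y‖ ≤ P * (1 + B) := by
        intro j hj y
        have heq : iteratedFDeriv ℝ j (hfun l ⇑ψ) y
            = iteratedFDeriv ℝ j (⇑ψ) y + (-(ψ l)) • iteratedFDeriv ℝ j (chi l) y := by
          have h1 : iteratedFDeriv ℝ j (hfun l ⇑ψ) y
              = iteratedFDeriv ℝ j (fun z => ψ z + (-(ψ l)) • chi l z) y := rfl
          rw [h1, iteratedFDeriv_add_apply' ((ψ.smooth ⊤).of_le (nat_le_infty j)).contDiffAt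
            ((chi_smooth.const_smul _).of_le (nat_le_infty j)).contDiffAt,
            iteratedFDeriv_const_smul_apply' (chi_smooth.of_le (nat_le_infty j)).contDiffAt]
        rw [heq]
        calc ‖iteratedFDeriv ℝ j (⇑ψ) y + (-(ψ l)) • iteratedFDeriv ℝ j (chi l) y‖
            ≤ ‖iteratedFDeriv ℝ j (⇑ψ) y‖ + ‖ψ l‖ * ‖iteratedFDeriv ℝ j (chi l) y‖ := by
              refine le_trans (norm_add_le _ _) ?_
              rw [norm_smul (-(ψ l)) (iteratedFDeriv ℝ j (chi l) y), norm_neg]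
          _ ≤ P + P * B := by
              have h1 := hψ j hj y
              have h2 := hB j hj y
              have h3 := mul_le_mul hψl h2 (norm_nonneg _) hP0
              exact add_le_add h1 h3
          _ = P * (1 + B) := by ring
      -- bound on Qd
      have hQ : ∀ m ≤ n, ∀ z : ℝ, ‖Qd l m (hfun l ⇑ψ) z‖ ≤ P * (1 + B) := by
        intro m hm z
        refine Qd_bound (hfun_smooth ψ) m (by positivity) (fun y => ?_) z
        rw [← norm_iteratedFDeriv_eq_norm_iteratedDeriv]
        exact hh (m + 1) (Nat.succ_le_succ hm) y
      by_cases hx : x ∈ closedBall l 2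
      · -- main estimate on the ball
        have hxn : ‖x‖ ≤ ‖l‖ + 2 := by
          have := mem_closedBall_iff_norm.mp hx
          calc ‖x‖ = ‖l + (x - l)‖ := by ring_nf
            _ ≤ ‖l‖ + ‖x - l‖ := norm_add_le _ _
            _ ≤ ‖l‖ + 2 := by linarith
        have hmul := norm_iteratedFDeriv_mul_le (𝕜 := ℝ)
          (f := fun y => (-Complex.I) * chi l y) (g := Qd l 0 (hfun l ⇑ψ))
          (chi_smooth.const_smul (-Complex.I) : ContDiff ℝ ∞ _)
          (contDiff_Qd (hfun_smooth ψ)) x (nat_le_infty n)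
        have hbig : ‖iteratedFDeriv ℝ n
            (fun y => ((-Complex.I) * chi l y) * Qd l 0 (hfun l ⇑ψ) y) x‖
            ≤ 2 ^ n * (B * (P * (1 + B))) := by
          refine le_trans hmul ?_
          have hterm : ∀ i ∈ Finset.range (n + 1),
              (n.choose i : ℝ) * ‖iteratedFDeriv ℝ i (fun y => (-Complex.I) * chi l y) x‖ *
                ‖iteratedFDeriv ℝ (n - i) (Qd l 0 (hfun l ⇑ψ)) x‖
              ≤ (n.choose i : ℝ) * (B * (P * (1 + B))) := by
            intro i hi
            have hi' : i ≤ n + 1 := le_trans (Nat.lt_succ_iff.mp (Finset.mem_range.mp hi))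
              (Nat.le_succ n)
            have h1 : ‖iteratedFDeriv ℝ i (fun y => (-Complex.I) * chi l y) x‖ ≤ B := by
              have : (fun y => (-Complex.I) * chi l y) = fun y => (-Complex.I) • chi l y := by
                funext y; simp [smul_eq_mul]
              rw [this, iteratedFDeriv_const_smul_apply' (chi_smooth.of_le (nat_le_infty i)).contDiffAt,
                norm_smul (-Complex.I) (iteratedFDeriv ℝ i (chi l) x)]
              simpa using hB i hi' x
            have h2 : ‖iteratedFDeriv ℝ (n - i) (Qd l 0 (hfun l ⇑ψ)) x‖ ≤ P * (1 + B) := by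
              rw [norm_iteratedFDeriv_eq_norm_iteratedDeriv, iteratedDeriv_Qd (hfun_smooth ψ)]
              exact hQ (n - i) (Nat.sub_le n i) x
            calc (n.choose i : ℝ) * ‖iteratedFDeriv ℝ i (fun y => (-Complex.I) * chi l y) x‖ *
                  ‖iteratedFDeriv ℝ (n - i) (Qd l 0 (hfun l ⇑ψ)) x‖
                ≤ (n.choose i : ℝ) * B * (P * (1 + B)) := by
                  apply mul_le_mul (mul_le_mul le_rfl h1 (norm_nonneg _) (by positivity)) h2
                    (norm_nonneg _) (by positivity)
              _ = (n.choose i : ℝ) * (B * (P * (1 + B))) := by ring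
          refine le_trans (Finset.sum_le_sum hterm) ?_
          rw [← Finset.sum_mul]
          have : (∑ i ∈ Finset.range (n + 1), (n.choose i : ℝ)) = 2 ^ n := by
            exact_mod_cast Nat.sum_range_choose n
          rw [this]
        have hfeq : (fun y => (-Complex.I) * (chi l y * Qd l 0 (hfun l ⇑ψ) y))
            = (fun y => ((-Complex.I) * chi l y) * Qd l 0 (hfun l ⇑ψ) y) := by
          funext y; ring
        calc ‖x‖ ^ k * ‖iteratedFDeriv ℝ n
              (fun y => (-Complex.I) * (chi l y * Qd l 0 (hfun l ⇑ψ) y)) x‖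
            = ‖x‖ ^ k * ‖iteratedFDeriv ℝ n
              (fun y => ((-Complex.I) * chi l y) * Qd l 0 (hfun l ⇑ψ) y) x‖ := by
              rw [hfeq]
          _ ≤ (‖l‖ + 2) ^ k * (2 ^ n * (B * (P * (1 + B)))) := by
              apply mul_le_mul (pow_le_pow_left₀ (norm_nonneg _) hxn k) hbig (norm_nonneg _)
                (by positivity)
          _ ≤ (‖l‖ + 2) ^ k * (2 ^ n * (B * (1 + B))) * P := le_of_eq (by ring)
      · -- outside the ball the function vanishes
        have hev : (fun y => (-Complex.I) * (chi l y * Qd l 0 (hfun l ⇑ψ) y))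
            =ᶠ[nhds x] (fun _ => (0:ℂ)) := by
          have hopen : IsOpen (closedBall l 2)ᶜ := isOpen_compl_iff.mpr isClosed_closedBall
          refine Filter.eventuallyEq_iff_exists_mem.mpr ⟨(closedBall l 2)ᶜ,
            hopen.mem_nhds hx, fun y hy => ?_⟩
          have : chi l y = 0 := chi_zero (le_of_lt (by simpa [mem_closedBall] using hy))
          simp [this]
        have hzero : ‖iteratedFDeriv ℝ n
            (fun y => (-Complex.I) * (chi l y * Qd l 0 (hfun l ⇑ψ) y)) x‖ = 0 := by
          rw [norm_iteratedFDeriv_eq_norm_iteratedDeriv,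
            Filter.EventuallyEq.iteratedDeriv_eq n hev, iteratedDeriv_zero_fun, norm_zero]
        rw [hzero, mul_zero]
        positivity)


lemma divOp_apply (ψ : 𝓢(ℝ, ℂ)) (x : ℝ) :
    divOp l ψ x = (-Complex.I) * (chi l x * Qd l 0 (hfun l ⇑ψ) x) := rfl

lemma mulPoly_at_center (φ : 𝓢(ℝ, ℂ)) : mulPoly (-(Complex.I * l)) φ l = 0 := by
  rw [mulPoly_apply]; ring

lemma hfun_of_zero {f : ℝ → ℂ} (hf : f l = 0) : hfun l f = f := by
  funext y
  rw [hfun_apply, hf, zero_mul, sub_zero]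

lemma Qd_at_center (g : ℝ → ℂ) : Qd l 0 g l = deriv g l := by
  rw [Qd]
  have h : ∀ t ∈ Set.uIcc (0:ℝ) 1,
      t ^ 0 • iteratedDeriv 1 g (l + t * (l - l)) = deriv g l := by
    intro t _; simp [iteratedDeriv_one]
  rw [intervalIntegral.integral_congr (g := fun _ => deriv g l) h]
  simp

/-- The fundamental identity: multiplying `divOp l ψ` by the polynomial recovers
`χ·(ψ - ψ(l)χ)`. -/
lemma key1 (ψ : 𝓢(ℝ, ℂ)) (x : ℝ) :
    mulPoly (-(Complex.I * l)) (divOp l ψ) x = chi l x * (ψ x - ψ l * chi l x) := by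
  rw [mulPoly_apply, divOp_apply]
  have h := Qd_mul (l := l) (g := hfun l ⇑ψ) (hfun_smooth (l := l) ψ) x
  rw [hfun_at, sub_zero] at h
  have h2 : ((x : ℂ) - (l : ℂ)) * Qd l 0 (hfun l ⇑ψ) x = hfun l ⇑ψ x := by
    rw [← Complex.ofReal_sub, ← Complex.real_smul, h]
  have h3 : hfun l ⇑ψ x = ψ x - ψ l * chi l x := hfun_apply _ _
  have hI := Complex.I_mul_I
  calc (Complex.I * x + -(Complex.I * l)) * ((-Complex.I) * (chi l x * Qd l 0 (hfun l ⇑ψ) x))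
      = (-(Complex.I * Complex.I)) * (chi l x * (((x:ℂ) - (l:ℂ)) * Qd l 0 (hfun l ⇑ψ) x)) := by
        ring
    _ = chi l x * (ψ x - ψ l * chi l x) := by rw [hI, h2, h3]; ring

/-- `divOp` applied to `mulPoly` recovers `χ·φ`. -/
lemma key2 (φ : 𝓢(ℝ, ℂ)) (x : ℝ) :
    divOp l (mulPoly (-(Complex.I * l)) φ) x = chi l x * φ x := by
  set c : ℂ := -(Complex.I * l) with hc
  have hml : mulPoly c φ l = 0 := mulPoly_at_center φ
  have hfeq : hfun l ⇑(mulPoly c φ) = ⇑(mulPoly c φ) := hfun_of_zero hml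
  rw [divOp_apply, hfeq]
  by_cases hx : x = l
  · rw [hx]
    rw [Qd_at_center]
    have hd : HasDerivAt (fun y : ℝ => mulPoly c φ y) (Complex.I * φ l) l := by
      have h1 : HasDerivAt (fun y : ℝ => Complex.I * (y:ℂ) + c) Complex.I l := by
        simpa using ((Complex.ofRealCLM.hasDerivAt (x := l)).const_mul Complex.I).add_const c
      have h2 : HasDerivAt (fun y : ℝ => φ y) (deriv (⇑φ) l) l :=
        ((φ.smooth ⊤).differentiable (by simp) l).hasDerivAt
      have h3 := h1.mul h2
      have h4 : Complex.I * φ l + (Complex.I * l + c) * deriv (⇑φ) l = Complex.I * φ l := by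
        rw [hc]; ring
      have h5 : HasDerivAt (fun y : ℝ => (Complex.I * (y:ℂ) + c) * φ y)
          (Complex.I * φ l) l := by rw [← h4]; exact h3
      have h6 : (fun y : ℝ => (Complex.I * (y:ℂ) + c) * φ y) = fun y : ℝ => mulPoly c φ y := by
        funext y; rw [mulPoly_apply]
      rw [← h6]; exact h5
    rw [hd.deriv]
    have hI := Complex.I_mul_I
    calc -Complex.I * (chi l l * (Complex.I * φ l))
        = (-(Complex.I * Complex.I)) * (chi l l * φ l) := by ring
      _ = chi l l * φ l := by rw [hI]; ring
  · have h := Qd_mul (l := l) (g := ⇑(mulPoly c φ)) ((mulPoly c φ).smooth ⊤) x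
    rw [hml, sub_zero] at h
    have h2 : ((x : ℂ) - (l : ℂ)) * Qd l 0 (⇑(mulPoly c φ)) x = mulPoly c φ x := by
      rw [← Complex.ofReal_sub, ← Complex.real_smul, h]
    have hxl : ((x : ℂ) - (l : ℂ)) ≠ 0 := by
      simpa [sub_eq_zero] using fun hh => hx (Complex.ofReal_injective hh)
    have h3 : Qd l 0 (⇑(mulPoly c φ)) x = Complex.I * φ x := by
      apply mul_left_cancel₀ hxl
      rw [h2, mulPoly_apply, hc]
      ring
    rw [h3]
    have hI := Complex.I_mul_I
    calc -Complex.I * (chi l x * (Complex.I * φ x))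
        = (-(Complex.I * Complex.I)) * (chi l x * φ x) := by ring
      _ = chi l x * φ x := by rw [hI]; ring

/-- If `ψ` vanishes on a ball around `l` then so does `divOp l ψ`. -/
lemma divOp_vanish (ψ : 𝓢(ℝ, ℂ)) {ε : ℝ} (hε : 0 < ε)
    (hvan : ∀ y ∈ ball l ε, ψ y = 0) : ∀ x ∈ ball l ε, divOp l ψ x = 0 := by
  intro x hx
  have hψl : ψ l = 0 := hvan l (mem_ball_self hε)
  have hfeq : hfun l ⇑ψ = ⇑ψ := hfun_of_zero hψl
  rw [divOp_apply, hfeq]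
  have hQ : Qd l 0 (⇑ψ) x = 0 := by
    rw [Qd]
    have h : ∀ t ∈ Set.uIcc (0:ℝ) 1,
        t ^ 0 • iteratedDeriv 1 (⇑ψ) (l + t * (x - l)) = 0 := by
      intro t ht
      rw [Set.uIcc_of_le (by norm_num : (0:ℝ) ≤ 1)] at ht
      have hmem : l + t * (x - l) ∈ ball l ε := by
        simp only [mem_ball, Real.dist_eq, add_sub_cancel_left]
        calc |t * (x - l)| = t * |x - l| := by
              rw [abs_mul, _root_.abs_of_nonneg ht.1]
          _ ≤ 1 * |x - l| := mul_le_mul_of_nonneg_right ht.2 (abs_nonneg _)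
          _ = |x - l| := one_mul _
          _ < ε := by simpa [Real.dist_eq] using hx
      have hev : (⇑ψ : ℝ → ℂ) =ᶠ[nhds (l + t * (x - l))] (fun _ => 0) :=
        Filter.eventuallyEq_iff_exists_mem.mpr ⟨ball l ε, isOpen_ball.mem_nhds hmem, hvan⟩
      rw [iteratedDeriv_one, hev.deriv_eq]
      simp
    rw [intervalIntegral.integral_congr (g := fun _ => (0:ℂ)) h]
    simp
  rw [hQ]
  simp
theorem stmt10 (l : ℝ) :
    (∀ S : 𝓢(ℝ, ℂ) →L[ℂ] ℂ, SuppInPt l S →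
      ∃ T : 𝓢(ℝ, ℂ) →L[ℂ] ℂ, SuppInPt l T ∧
        ∀ φ : 𝓢(ℝ, ℂ), T (mulPoly (-(Complex.I * l)) φ) = S φ) ∧
    (∀ T : 𝓢(ℝ, ℂ) →L[ℂ] ℂ, SuppInPt l T →
      ((∀ φ : 𝓢(ℝ, ℂ), T (mulPoly (-(Complex.I * l)) φ) = 0) ↔
        ∃ a : ℂ, T = a • (BoundedContinuousFunction.evalCLM ℂ l).comp
          (SchwartzMap.toBoundedContinuousFunctionCLM ℂ ℝ ℂ))) := by
  constructor
  · -- surjectivity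
    intro S hS
    refine ⟨S.comp (divOp l), ?_, ?_⟩
    · rintro φ ⟨U, hU, hvan⟩
      obtain ⟨ε, hε, hball⟩ := Metric.mem_nhds_iff.mp hU
      have hv : ∀ y ∈ ball l ε, φ y = 0 := fun y hy => hvan y (hball hy)
      show S (divOp l φ) = 0
      exact hS _ ⟨ball l ε, isOpen_ball.mem_nhds (mem_ball_self hε), divOp_vanish φ hε hv⟩
    · intro φ
      show S (divOp l (mulPoly (-(Complex.I * l)) φ)) = S φ
      have hdiff : ∀ x ∈ ball l 1,
          (divOp l (mulPoly (-(Complex.I * l)) φ) - φ) x = 0 := by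
        intro x hx
        have h := key2 (l := l) φ x
        have hchi : chi l x = 1 := chi_one (ball_subset_closedBall hx)
        rw [SchwartzMap.sub_apply, h, hchi, one_mul, sub_self]
      have h0 : S (divOp l (mulPoly (-(Complex.I * l)) φ) - φ) = 0 :=
        hS _ ⟨ball l 1, isOpen_ball.mem_nhds (mem_ball_self one_pos), hdiff⟩
      rw [map_sub] at h0
      exact sub_eq_zero.mp h0
  · intro T hT
    constructor
    · intro hker
      refine ⟨T (chiS l), ?_⟩
      ext ψ
      have hω : ∀ x ∈ ball l 1,
          (ψ - ψ l • chiS l - mulPoly (-(Complex.I * l)) (divOp l ψ)) x = 0 := by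
        intro x hx
        have h := key1 (l := l) ψ x
        have hchi : chi l x = 1 := chi_one (ball_subset_closedBall hx)
        rw [SchwartzMap.sub_apply, SchwartzMap.sub_apply, SchwartzMap.smul_apply, h, hchi,
          chiS_apply, hchi]
        simp only [smul_eq_mul]
        ring
      have h0 : T (ψ - ψ l • chiS l - mulPoly (-(Complex.I * l)) (divOp l ψ)) = 0 :=
        hT _ ⟨ball l 1, isOpen_ball.mem_nhds (mem_ball_self one_pos), hω⟩
      rw [map_sub, map_sub, _root_.map_smul, hker (divOp l ψ), sub_zero, sub_eq_zero] at h0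
      rw [ContinuousLinearMap.smul_apply, ContinuousLinearMap.comp_apply, BoundedContinuousFunction.evalCLM_apply, SchwartzMap.toBoundedContinuousFunctionCLM_apply, h0]
      simp only [smul_eq_mul]
      ring
    · rintro ⟨a, rfl⟩ φ
      rw [ContinuousLinearMap.smul_apply, ContinuousLinearMap.comp_apply, BoundedContinuousFunction.evalCLM_apply, SchwartzMap.toBoundedContinuousFunctionCLM_apply, mulPoly_at_center]
      simp
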